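/- For every n ≥ 1, every integer in {0, 1, …, n} \ {⌊n/2⌋} is an eigenvalue of the adjacency matrix of the burnt pancake graph BP_n. -/

import Mathlib

/-- The set `±[n] = {-n, …, -1, 1, …, n}` as a subtype of `ℤ`. -/
def PM (n : ℕ) : Type := {x : ℤ // x ≠ 0 ∧ x.natAbs ≤ n}

instance (n : ℕ) : DecidableEq (PM n) := fun _ _ =>
  decidable_of_iff _ Subtype.ext_iff.symm

instance (n : ℕ) : Finite (PM n) :=
  Set.Finite.to_subtype (s := {x : ℤ | x ≠ 0 ∧ x.natAbs ≤ n})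
    (Set.Finite.subset (Set.finite_Icc (-(n : ℤ)) n)
      (fun x hx => by simp only [Set.mem_setOf_eq] at hx; simp only [Set.mem_Icc]; omega))

noncomputable instance (n : ℕ) : Fintype (PM n) := Fintype.ofFinite _

/-- Negation on `±[n]`. -/
def negPM (n : ℕ) (x : PM n) : PM n :=
  ⟨-x.1, by have hx := x.2; constructor <;> omega⟩

/-- The `i`-th signed prefix reversal `r_i = (1,-i)(2,-(i-1))⋯(i,-1)` as a
function on `ℤ`: it sends `x` with `1 ≤ x ≤ i` to `-(i+1-x)`, sends `x` with
`-i ≤ x ≤ -1` to `i+1+x`, and fixes every other `x`. -/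
def rfun (i x : ℤ) : ℤ :=
  if 1 ≤ x ∧ x ≤ i then x - i - 1 else if -i ≤ x ∧ x ≤ -1 then x + i + 1 else x

lemma rfun_invol (i : ℤ) : Function.Involutive (rfun i) := by
  intro x; unfold rfun; split_ifs <;> omega

/-- The signed prefix reversal `r_{i+1}` (for `i : Fin n`, so that the
one-based index `i+1` ranges over `1, …, n`) as a map `±[n] → ±[n]`. -/
def rMap (n : ℕ) (i : Fin n) (x : PM n) : PM n :=
  ⟨rfun ((i : ℕ) + 1) x.1, by
    have hx := x.2; have hi := i.2; unfold rfun; split_ifs <;> constructor <;> omega⟩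

/-- The signed prefix reversal `r_{i+1}` as a permutation of `±[n]`. -/
def rPerm (n : ℕ) (i : Fin n) : Equiv.Perm (PM n) :=
  Function.Involutive.toPerm (rMap n i)
    (by intro x; apply Subtype.ext; exact rfun_invol _ x.1)

/-- The hyperoctahedral group `B_n`, realized as the subgroup of permutations
`σ` of `±[n]` satisfying `σ(-x) = -σ(x)`. -/
def Bgroup (n : ℕ) : Subgroup (Equiv.Perm (PM n)) where
  carrier := {σ | ∀ x, σ (negPM n x) = negPM n (σ x)}
  one_mem' := fun _ => rfl
  mul_mem' := by
    intro a b ha hb x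
    simp only [Equiv.Perm.mul_apply, hb x, ha (b x)]
  inv_mem' := by
    intro a ha x
    have h := ha (a⁻¹ x)
    rw [show a (a⁻¹ x) = x from a.apply_symm_apply x] at h
    rw [← h, show ∀ y, a⁻¹ (a y) = y from a.symm_apply_apply]

lemma rPerm_mem (n : ℕ) (i : Fin n) : rPerm n i ∈ Bgroup n := by
  intro x
  apply Subtype.ext
  show rfun ((i : ℕ) + 1) (-x.1) = -(rfun ((i : ℕ) + 1) x.1)
  have hx := x.2
  unfold rfun
  split_ifs <;> omega

/-- The signed prefix reversal `r_{i+1}` as an element of `B_n`. -/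
def rElem (n : ℕ) (i : Fin n) : ↥(Bgroup n) := ⟨rPerm n i, rPerm_mem n i⟩

lemma rElem_mul_self (n : ℕ) (i : Fin n) : rElem n i * rElem n i = 1 := by
  apply Subtype.ext
  apply Equiv.ext
  intro x
  apply Subtype.ext
  exact rfun_invol _ x.1

/-- The burnt pancake graph `BP_n`: the Cayley graph of `B_n` with respect to
the signed prefix reversals `r_1, …, r_n`. -/
def BP (n : ℕ) : SimpleGraph ↥(Bgroup n) where
  Adj σ τ := σ ≠ τ ∧ ∃ i : Fin n, τ = σ * rElem n i
  symm := ⟨by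
    rintro σ τ ⟨hne, i, rfl⟩
    exact ⟨hne.symm, i, by rw [mul_assoc, rElem_mul_self, mul_one]⟩⟩
  loopless := ⟨fun σ h => h.1 rfl⟩

instance (n : ℕ) : Finite ↥(Bgroup n) := Subtype.finite

noncomputable instance (n : ℕ) : Fintype ↥(Bgroup n) := Fintype.ofFinite _

noncomputable instance (n : ℕ) (v : ↥(Bgroup n)) : Fintype ((BP n).neighborSet v) :=
  Fintype.ofFinite _

section BPaux

open Finset

lemma rfun_fix (i : ℕ) (x : ℤ) (h : i + 1 < x.natAbs) : rfun ((i : ℤ) + 1) x = x := by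
  unfold rfun; split_ifs <;> omega

lemma rfun_abs (i : ℕ) (x : ℤ) (h0 : x ≠ 0) (h : x.natAbs ≤ i + 1) :
    (rfun ((i : ℤ) + 1) x).natAbs = i + 2 - x.natAbs := by
  unfold rfun; split_ifs <;> omega

lemma eig_sum (n m : ℕ) (g : ℕ → ℤ)
    (hkey : ∀ y : ℕ, 1 ≤ y → y ≤ n →
      ((y : ℤ) - 1) * g y + (∑ t ∈ Finset.Icc 1 (n + 1 - y), g t) = (m : ℤ) * g y)
    (x : ℤ) (hx0 : x ≠ 0) (hxn : x.natAbs ≤ n) :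
    ∑ i ∈ Finset.range n, g ((rfun ((i : ℤ) + 1) x).natAbs) = (m : ℤ) * g x.natAbs := by
  set y := x.natAbs with hy
  have hy1 : 1 ≤ y := by omega
  rw [Finset.range_eq_Ico,
    ← Finset.sum_Ico_consecutive _ (Nat.zero_le (y - 1)) (by omega : y - 1 ≤ n)]
  have h1 : ∑ i ∈ Finset.Ico 0 (y - 1), g ((rfun ((i : ℤ) + 1) x).natAbs)
      = ((y : ℤ) - 1) * g y := by
    have hcg : ∀ i ∈ Finset.Ico 0 (y - 1), g ((rfun ((i : ℤ) + 1) x).natAbs) = g y :=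
      fun i hi => by rw [rfun_fix i x (by simp [Finset.mem_Ico] at hi; omega)]
    rw [Finset.sum_congr rfl hcg, Finset.sum_const, Nat.card_Ico, nsmul_eq_mul]
    have hc : ((y - 1 - 0 : ℕ) : ℤ) = (y : ℤ) - 1 := by omega
    rw [hc]
  have h2 : ∑ i ∈ Finset.Ico (y - 1) n, g ((rfun ((i : ℤ) + 1) x).natAbs)
      = ∑ t ∈ Finset.Icc 1 (n + 1 - y), g t := by
    have hcg : ∀ i ∈ Finset.Ico (y - 1) n, g ((rfun ((i : ℤ) + 1) x).natAbs) = g (i + 2 - y) :=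
      fun i hi => by rw [rfun_abs i x hx0 (by simp [Finset.mem_Ico] at hi; omega)]
    rw [Finset.sum_congr rfl hcg]
    refine Finset.sum_nbij' (fun i => i + 2 - y) (fun t => t + y - 2) ?_ ?_ ?_ ?_ ?_
    · intro a ha; simp only [Finset.mem_Ico] at ha; simp only [Finset.mem_Icc]; omega
    · intro a ha; simp only [Finset.mem_Icc] at ha; simp only [Finset.mem_Ico]; omega
    · intro a ha; simp only [Finset.mem_Ico] at ha; omega
    · intro a ha; simp only [Finset.mem_Icc] at ha; omega
    · intro a ha; rfl
  rw [h1, h2, hkey y hy1 hxn]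

open scoped Classical in
lemma BP_master (n m : ℕ) (hn : 1 ≤ n) (g : ℕ → ℤ)
    (hkey : ∀ y : ℕ, 1 ≤ y → y ≤ n →
      ((y : ℤ) - 1) * g y + (∑ t ∈ Finset.Icc 1 (n + 1 - y), g t) = (m : ℤ) * g y)
    (y₀ : ℕ) (hy₀1 : 1 ≤ y₀) (hy₀n : y₀ ≤ n) (hy₀g : g y₀ ≠ 0) :
    Module.End.HasEigenvalue (Matrix.toLin' ((BP n).adjMatrix ℝ)) (m : ℝ) := by
  have hx₀ : ((y₀ : ℤ) ≠ 0 ∧ (y₀ : ℤ).natAbs ≤ n) := by constructor <;> omega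
  set x₀ : PM n := ⟨(y₀ : ℤ), hx₀⟩ with hx₀def
  set f : ↥(Bgroup n) → ℝ := fun σ => ((g (((σ.1)⁻¹ x₀).1.natAbs) : ℤ) : ℝ) with hf
  have pt1mem : (1 : ℤ) ≠ 0 ∧ (1 : ℤ).natAbs ≤ n := by constructor <;> omega
  set pt1 : PM n := ⟨1, pt1mem⟩ with hpt1
  have pt1val : pt1.1 = 1 := rfl
  -- rElem applied, value
  have rElem_val : ∀ (i : Fin n) (x : PM n),
      (((rElem n i : ↥(Bgroup n)) : Equiv.Perm (PM n)) x).1 = rfun ((i : ℤ) + 1) x.1 := by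
    intro i x; rfl
  have rElem_inv : ∀ i : Fin n, (rElem n i)⁻¹ = rElem n i := fun i =>
    inv_eq_of_mul_eq_one_right (rElem_mul_self n i)
  have hinj : ∀ σ : ↥(Bgroup n), ∀ i j : Fin n,
      σ * rElem n i = σ * rElem n j → i = j := by
    intro σ i j h
    have h' : rElem n i = rElem n j := mul_left_cancel h
    have h2 : (((rElem n i : ↥(Bgroup n)) : Equiv.Perm (PM n)) pt1).1
        = (((rElem n j : ↥(Bgroup n)) : Equiv.Perm (PM n)) pt1).1 := by rw [h']
    rw [rElem_val, rElem_val, pt1val] at h2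
    unfold rfun at h2
    apply Fin.ext
    split_ifs at h2 <;> omega
  have hne_self : ∀ (σ : ↥(Bgroup n)) (i : Fin n), σ * rElem n i ≠ σ := by
    intro σ i h
    have h' : rElem n i = 1 := by
      exact mul_left_cancel (a := σ) (by rw [mul_one]; exact h)
    have h2 : (((rElem n i : ↥(Bgroup n)) : Equiv.Perm (PM n)) pt1).1
        = (((1 : ↥(Bgroup n)) : Equiv.Perm (PM n)) pt1).1 := by rw [h']
    rw [rElem_val] at h2
    simp only [OneMemClass.coe_one, Equiv.Perm.coe_one, id_eq] at h2
    unfold rfun at h2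
    split_ifs at h2 <;> omega
  apply Module.End.hasEigenvalue_of_hasEigenvector (x := f)
  rw [Module.End.hasEigenvector_iff]
  constructor
  · rw [Module.End.mem_eigenspace_iff, Matrix.toLin'_apply]
    funext σ
    have hNF : Finset.filter (fun τ => (BP n).Adj σ τ) Finset.univ
        = Finset.image (fun i : Fin n => σ * rElem n i) Finset.univ := by
      ext τ
      simp only [Finset.mem_filter, Finset.mem_univ, true_and, Finset.mem_image]
      constructor
      · intro hA; obtain ⟨hne, i, rfl⟩ := (show σ ≠ τ ∧ ∃ i : Fin n, τ = σ * rElem n i from hA); exact ⟨i, rfl⟩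
      · rintro ⟨i, rfl⟩; exact (show σ ≠ σ * rElem n i ∧ ∃ j : Fin n, σ * rElem n i = σ * rElem n j from ⟨(hne_self σ i).symm, i, rfl⟩)
    have hstep1 : (((BP n).adjMatrix ℝ).mulVec f) σ
        = ∑ τ : ↥(Bgroup n), (if (BP n).Adj σ τ then f τ else 0) := by
      simp [Matrix.mulVec, dotProduct, SimpleGraph.adjMatrix_apply, ite_mul, one_mul]
    rw [hstep1, ← Finset.sum_filter, hNF,
      Finset.sum_image (fun i _ j _ h => hinj σ i j h)]
    have hterm : ∀ i : Fin n,
        f (σ * rElem n i) = ((g ((rfun ((i : ℤ) + 1) ((σ.1⁻¹ x₀).1)).natAbs) : ℤ) : ℝ) := by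
      intro i
      have : ((σ * rElem n i).1)⁻¹ x₀
          = ((rElem n i : ↥(Bgroup n)) : Equiv.Perm (PM n)) ((σ.1)⁻¹ x₀) := by
        rw [MulMemClass.coe_mul, mul_inv_rev, Equiv.Perm.mul_apply,
          ← InvMemClass.coe_inv, rElem_inv]
      rw [hf]
      simp only [this, rElem_val]
    simp only [hterm]
    rw [Fin.sum_univ_eq_sum_range (fun i => ((g ((rfun ((i : ℤ) + 1) ((σ.1⁻¹ x₀).1)).natAbs) : ℤ) : ℝ)) n]
    have hx := ((σ.1)⁻¹ x₀).2
    have := eig_sum n m g hkey ((σ.1)⁻¹ x₀).1 hx.1 hx.2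
    simp only [Pi.smul_apply, smul_eq_mul, hf]
    exact_mod_cast this
  · intro h0
    apply hy₀g
    have h1 : f 1 = 0 := by rw [h0]; rfl
    rw [hf] at h1
    simp only [OneMemClass.coe_one, inv_one, Equiv.Perm.coe_one, id_eq] at h1
    have : g ((y₀ : ℤ).natAbs) = 0 := by exact_mod_cast h1
    simpa using this

/-- Eigenvector profile for the regime `2m ≥ n+1`. -/
def gA (n m j : ℕ) : ℤ :=
  if n < j + m ∧ j ≤ m then -1 else if j = m + 1 then 2 * (m : ℤ) - n else 0

/-- Partial sums of `gA`. -/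
def GA (n m k : ℕ) : ℤ :=
  if k + m ≤ n then 0 else if k ≤ m then (n : ℤ) - m - k else 0

lemma sum_gA (n m : ℕ) (hm : m ≤ n) (hreg : n + 1 ≤ 2 * m) (k : ℕ) :
    ∑ t ∈ Finset.Icc 1 k, gA n m t = GA n m k := by
  induction k with
  | zero =>
    rw [Finset.Icc_eq_empty (by omega), Finset.sum_empty]
    unfold GA; split_ifs <;> omega
  | succ k ih =>
    rw [Finset.sum_Icc_succ_top (by omega), ih]
    unfold GA gA; split_ifs <;> push_cast <;> omega

lemma keyA (n m : ℕ) (hm : m ≤ n) (hreg : n + 1 ≤ 2 * m) :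
    ∀ y : ℕ, 1 ≤ y → y ≤ n →
      ((y : ℤ) - 1) * gA n m y + (∑ t ∈ Finset.Icc 1 (n + 1 - y), gA n m t)
        = (m : ℤ) * gA n m y := by
  intro y h1 hyn
  rw [sum_gA n m hm hreg]
  by_cases hy : y = m + 1
  · subst hy
    rw [show n + 1 - (m + 1) = n - m by omega]
    have hc : ((n - m : ℕ) : ℤ) = (n : ℤ) - (m : ℤ) := by omega
    unfold gA GA
    split_ifs <;> first | (exfalso; omega) | (push_cast [hc]; ring)
  · unfold gA GA
    split_ifs <;> first
      | (exfalso; omega) | (push_cast; ring_nf; omega) | (push_cast; ring_nf)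

/-- Eigenvector profile for the regime `2m ≤ n-2`. -/
def gB (n m j : ℕ) : ℤ :=
  if j = m + 1 then 2 * (m : ℤ) + 1 - n else if m + 2 ≤ j ∧ j + m ≤ n then 1 else 0

/-- Partial sums of `gB`. -/
def GB (n m k : ℕ) : ℤ :=
  if k ≤ m then 0 else if k + m ≤ n then (k : ℤ) + m - n else 0

lemma sum_gB (n m : ℕ) (hreg : 2 * m + 2 ≤ n) (k : ℕ) :
    ∑ t ∈ Finset.Icc 1 k, gB n m t = GB n m k := by
  induction k with
  | zero =>
    rw [Finset.Icc_eq_empty (by omega), Finset.sum_empty]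
    unfold GB; split_ifs <;> omega
  | succ k ih =>
    rw [Finset.sum_Icc_succ_top (by omega), ih]
    unfold GB gB; split_ifs <;> push_cast <;> omega

lemma keyB (n m : ℕ) (hreg : 2 * m + 2 ≤ n) :
    ∀ y : ℕ, 1 ≤ y → y ≤ n →
      ((y : ℤ) - 1) * gB n m y + (∑ t ∈ Finset.Icc 1 (n + 1 - y), gB n m t)
        = (m : ℤ) * gB n m y := by
  intro y h1 hyn
  rw [sum_gB n m hreg]
  by_cases hy : y = m + 1
  · subst hy
    rw [show n + 1 - (m + 1) = n - m by omega]
    have hc : ((n - m : ℕ) : ℤ) = (n : ℤ) - (m : ℤ) := by omega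
    unfold gB GB
    split_ifs <;> first | (exfalso; omega) | (push_cast [hc]; ring)
  · unfold gB GB
    split_ifs <;> first
      | (exfalso; omega) | (push_cast; ring_nf; omega) | (push_cast; ring_nf)

end BPaux

open scoped Classical in
/-- For every `n ≥ 1`, every integer in
`{0, 1, …, n} \ {⌊n/2⌋}` is an eigenvalue of the adjacency matrix of the burnt
pancake graph `BP_n`. -/
theorem BP_integer_eigenvalues (n : ℕ) (hn : 1 ≤ n) (m : ℕ) (hm : m ≤ n)
    (hne : m ≠ n / 2) :
    Module.End.HasEigenvalue (Matrix.toLin' ((BP n).adjMatrix ℝ)) (m : ℝ) := by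
  rcases (by omega : n + 1 ≤ 2 * m ∨ 2 * m + 2 ≤ n) with h | h
  · exact BP_master n m hn (gA n m) (keyA n m hm h) m (by omega) hm
      (by unfold gA; split_ifs <;> omega)
  · exact BP_master n m hn (gB n m) (keyB n m h) (n - m) (by omega) (by omega)
      (by unfold gB; split_ifs <;> omega)
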